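/- Let C = VᵀV be an n×n real positive semidefinite matrix of rank d, where V is a d×n real matrix with columns v_1,…,v_n, and let s be an integer with 1 ≤ s ≤ d. Assume δ := min_{|T| = s} λ_min(C_{T,T}) > 0, and let λ_max(C) denote the largest eigenvalue of C. Let Ŝ ⊆ {1,…,n} with |Ŝ| = s be locally optimal (for every i ∈ Ŝ and j ∉ Ŝ, det(C_{Ŝ∪{j}∖{i}, Ŝ∪{j}∖{i}}) ≤ det(C_{Ŝ,Ŝ})) and suppose additionally that v_iᵀ v_j = 0 for every pair (i,j) ∈ Ŝ × ({1,…,n}∖Ŝ). Then for every subset S ⊆ {1,…,n} with |S| = s, det(C_{S,S}) ≤ (min{ λ_max(C)/δ, (λ_max(C)/(s·δ))·(n−s) − n/s + 2 })^s · det(C_{Ŝ,Ŝ}). -/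

import Mathlib

open Matrix Finset

noncomputable section

/-- `lam` lists the eigenvalues (with multiplicity) of the real symmetric matrix `X`,
via an orthogonal spectral decomposition. -/
def IsSpectralDecomp {m : Type*} [Fintype m] [DecidableEq m]
    (X : Matrix m m ℝ) (lam : m → ℝ) : Prop :=
  ∃ Q : Matrix m m ℝ, Q * Qᵀ = 1 ∧ X = Q * Matrix.diagonal lam * Qᵀ

/-- Principal submatrix `C_{S,S}`. -/
def subSub {n : ℕ} (C : Matrix (Fin n) (Fin n) ℝ) (S : Finset (Fin n)) :
    Matrix {i // i ∈ S} {i // i ∈ S} ℝ :=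
  Matrix.of fun a b => C a.1 b.1

/-- The value `λ_{i+1}` (1-based), i.e. the coordinate of `lam` of 0-based index `i`;
`0` when out of range. -/
def extVal {d : ℕ} (lam : Fin d → ℝ) : ℕ → ℝ :=
  fun i => if h : i < d then lam ⟨i, h⟩ else 0

/-- `∑_{i=k+1}^d λ_i` (1-based), i.e. the sum of the coordinates of 0-based index `≥ k`. -/
def tailSum {d : ℕ} (lam : Fin d → ℝ) (k : ℕ) : ℝ :=
  ∑ i ∈ Finset.univ.filter (fun i : Fin d => k ≤ (i : ℕ)), lam i

/-- `k = k(λ, s)`: an integer `0 ≤ k < s` with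
`λ_k > (1/(s-k)) ∑_{i=k+1}^d λ_i ≥ λ_{k+1}`, with the convention `λ₀ = +∞`. -/
def IsKIndex {d : ℕ} (lam : Fin d → ℝ) (s k : ℕ) : Prop :=
  k < s ∧ extVal lam k ≤ tailSum lam k / ((s : ℝ) - k) ∧
    (k = 0 ∨ tailSum lam k / ((s : ℝ) - k) < extVal lam (k - 1))

/-- `P` is the Moore–Penrose pseudoinverse of `X`. -/
def IsPseudoInv {d : ℕ} (X P : Matrix (Fin d) (Fin d) ℝ) : Prop :=
  X * P * X = X ∧ P * X * P = P ∧ (X * P)ᵀ = X * P ∧ (P * X)ᵀ = P * X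

namespace Stmt13Aux

variable {m : Type*} [Fintype m] [DecidableEq m]

lemma eig_form (M : Matrix m m ℝ) (hM : M.IsHermitian) (i : m) :
    hM.eigenvalues i = (hM.eigenvectorBasis i : m → ℝ) ⬝ᵥ M *ᵥ (hM.eigenvectorBasis i : m → ℝ) := by
  have := hM.eigenvalues_eq i
  simpa using this

lemma eig_unit (M : Matrix m m ℝ) (hM : M.IsHermitian) (i : m) :
    ((hM.eigenvectorBasis i : m → ℝ) ⬝ᵥ (hM.eigenvectorBasis i : m → ℝ)) = 1 := by
  have h := hM.eigenvectorBasis.orthonormal.1 i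
  have h2 := EuclideanSpace.inner_eq_star_dotProduct (hM.eigenvectorBasis i) (hM.eigenvectorBasis i)
  rw [real_inner_self_eq_norm_sq] at h2
  rw [h] at h2
  simpa using h2.symm

lemma det_ge_of_form (M : Matrix m m ℝ) (hM : M.IsHermitian) (a : ℝ) (ha : 0 ≤ a)
    (h : ∀ y : m → ℝ, a * (y ⬝ᵥ y) ≤ y ⬝ᵥ M *ᵥ y) :
    a ^ (Fintype.card m) ≤ M.det := by
  have hdet : M.det = ∏ i, hM.eigenvalues i := by
    simpa using hM.det_eq_prod_eigenvalues
  have hc : a ^ (Fintype.card m) = ∏ _i : m, a := by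
    rw [Finset.prod_const, Finset.card_univ]
  rw [hdet, hc]
  refine Finset.prod_le_prod (fun i _ => ha) (fun i _ => ?_)
  have := h (hM.eigenvectorBasis i)
  rw [eig_unit M hM i, mul_one] at this
  rw [eig_form M hM i]
  exact this

lemma det_le_of_form (M : Matrix m m ℝ) (hM : M.IsHermitian) (L : ℝ)
    (h0 : ∀ y : m → ℝ, 0 ≤ y ⬝ᵥ M *ᵥ y)
    (h : ∀ y : m → ℝ, y ⬝ᵥ M *ᵥ y ≤ L * (y ⬝ᵥ y)) :
    M.det ≤ L ^ (Fintype.card m) := by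
  have hdet : M.det = ∏ i, hM.eigenvalues i := by
    simpa using hM.det_eq_prod_eigenvalues
  have hc : L ^ (Fintype.card m) = ∏ _i : m, L := by
    rw [Finset.prod_const, Finset.card_univ]
  rw [hdet, hc]
  refine Finset.prod_le_prod (fun i _ => ?_) (fun i _ => ?_)
  · rw [eig_form M hM i]; exact h0 _
  · have := h (hM.eigenvectorBasis i)
    rw [eig_unit M hM i, mul_one] at this
    rw [eig_form M hM i]
    exact this





lemma schur_det_ge {α β : Type*} [Fintype α] [Fintype β] [DecidableEq α] [DecidableEq β]
    (M : Matrix (α ⊕ β) (α ⊕ β) ℝ) (hsym : M.IsHermitian) (δ : ℝ) (hδ : 0 < δ)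
    (hq : ∀ y : α ⊕ β → ℝ, δ * (y ⬝ᵥ y) ≤ y ⬝ᵥ M *ᵥ y) :
    δ ^ (Fintype.card β) * (M.toBlocks₁₁).det ≤ M.det := by
  set A := M.toBlocks₁₁ with hA
  set B := M.toBlocks₁₂ with hB
  set D := M.toBlocks₂₂ with hD
  have hM : M = fromBlocks A B Bᴴ D := by
    have h21 : M.toBlocks₂₁ = Bᴴ := by
      ext b a
      simpa [toBlocks₂₁, toBlocks₁₂, hB] using hsym.apply (Sum.inl a) (Sum.inr b)
    rw [← fromBlocks_toBlocks M, h21]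
  have hAherm : A.IsHermitian := by
    ext a b
    simpa [hA, toBlocks₁₁] using (hsym.apply (Sum.inl b) (Sum.inl a)).symm
  have hself : ∀ v : α → ℝ, 0 ≤ v ⬝ᵥ v := fun v =>
    Finset.sum_nonneg fun i _ => mul_self_nonneg _
  have hAq : ∀ x : α → ℝ, δ * (x ⬝ᵥ x) ≤ x ⬝ᵥ A *ᵥ x := by
    intro x
    have := hq (Sum.elim x 0)
    rw [hM] at this
    simpa [fromBlocks_mulVec, sumElim_dotProduct_sumElim] using this
  have hApd : A.PosDef := by
    refine posDef_iff_dotProduct_mulVec.mpr ⟨hAherm, fun x hx => ?_⟩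
    have hxx : 0 < x ⬝ᵥ x := by
      rcases (Finset.sum_nonneg fun i (_ : i ∈ Finset.univ) =>
        mul_self_nonneg (x i)).lt_or_eq with h | h
      · exact h
      · exfalso; apply hx
        ext i
        have := (Finset.sum_eq_zero_iff_of_nonneg
          (fun i (_ : i ∈ Finset.univ) => mul_self_nonneg (x i))).mp h.symm i (Finset.mem_univ i)
        exact mul_self_eq_zero.mp this
    have := hAq x
    simp only [star_trivial]
    calc (0:ℝ) < δ * (x ⬝ᵥ x) := by positivity
    _ ≤ _ := this
  have hdetA : 0 < A.det := hApd.det_pos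
  have hInv : Invertible A := A.invertibleOfIsUnitDet (isUnit_iff_ne_zero.mpr hdetA.ne')
  set SC := D - Bᴴ * A⁻¹ * B with hSC
  have hDherm : D.IsHermitian := by
    ext b1 b2
    simpa [toBlocks₂₂, hD] using hsym.apply (Sum.inr b1) (Sum.inr b2)
  have hSCherm : SC.IsHermitian := by
    apply hDherm.sub
    have := isHermitian_conjTranspose_mul_mul B hAherm.inv
    simpa [Matrix.mul_assoc] using this
  have hSCq : ∀ y : β → ℝ, δ * (y ⬝ᵥ y) ≤ y ⬝ᵥ SC *ᵥ y := by
    intro y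
    have hkey := schur_complement_eq₁₁ (α := ℝ) B D (-((A⁻¹ * B) *ᵥ y)) y hAherm
    simp only [star_trivial, neg_add_cancel, zero_vecMul, zero_dotProduct, zero_add] at hkey
    have h1 : y ⬝ᵥ SC *ᵥ y = (Sum.elim (-((A⁻¹ * B) *ᵥ y)) y) ⬝ᵥ
        (fromBlocks A B Bᴴ D) *ᵥ (Sum.elim (-((A⁻¹ * B) *ᵥ y)) y) := by
      rw [dotProduct_mulVec, dotProduct_mulVec, hkey]
    rw [h1, ← hM]
    calc δ * (y ⬝ᵥ y) ≤ δ * ((-((A⁻¹ * B) *ᵥ y)) ⬝ᵥ (-((A⁻¹ * B) *ᵥ y)) + y ⬝ᵥ y) := by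
          have := hself (-((A⁻¹ * B) *ᵥ y))
          nlinarith
      _ = δ * ((Sum.elim (-((A⁻¹ * B) *ᵥ y)) y) ⬝ᵥ (Sum.elim (-((A⁻¹ * B) *ᵥ y)) y)) := by
          rw [sumElim_dotProduct_sumElim]
      _ ≤ _ := hq _
  have hdetSC : δ ^ (Fintype.card β) ≤ SC.det := det_ge_of_form SC hSCherm δ hδ.le hSCq
  have hdetM : M.det = A.det * SC.det := by
    rw [hM, det_fromBlocks₁₁, invOf_eq_nonsing_inv]
  rw [hdetM, mul_comm (δ ^ (Fintype.card β))]
  exact mul_le_mul_of_nonneg_left hdetSC hdetA.le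


lemma numeric (sN r : ℕ) (m t : ℝ) (hs : 1 ≤ sN) (ht : 1 ≤ t) (hrs : r ≤ sN) (hrm : (r:ℝ) ≤ m) :
    t ^ r ≤ (min t ((m * t + ((sN:ℝ) - m)) / sN)) ^ sN := by
  have hsp : (0:ℝ) < sN := by exact_mod_cast hs
  have ht0 : (0:ℝ) < t := lt_of_lt_of_le one_pos ht
  set B := (m * t + ((sN:ℝ) - m)) / sN with hB
  rcases le_total t B with h | h
  · rw [min_eq_left h]
    exact pow_le_pow_right₀ ht hrs
  · rw [min_eq_right h]
    have havg : ((r:ℝ) * t + ((sN:ℝ) - r)) / sN ≤ B := by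
      rw [hB]
      have hnum : (r:ℝ) * t + ((sN:ℝ) - r) ≤ m * t + ((sN:ℝ) - m) := by nlinarith
      exact (div_le_div_iff_of_pos_right hsp).mpr hnum
    have hgm : t ^ ((r:ℝ)/(sN:ℝ)) ≤ ((r:ℝ) * t + ((sN:ℝ) - r)) / sN := by
      have := Real.geom_mean_le_arith_mean2_weighted
        (w₁ := (r:ℝ)/sN) (w₂ := ((sN:ℝ) - r)/sN) (p₁ := t) (p₂ := 1)
        (by positivity) (by
          have hc : (r:ℝ) ≤ sN := by exact_mod_cast hrs
          exact div_nonneg (by linarith) hsp.le)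
        ht0.le zero_le_one (by field_simp; ring)
      calc t ^ ((r:ℝ)/(sN:ℝ)) = t ^ ((r:ℝ)/(sN:ℝ)) * 1 ^ (((sN:ℝ) - r)/sN) := by
            rw [Real.one_rpow, mul_one]
        _ ≤ (r:ℝ)/sN * t + ((sN:ℝ) - r)/sN * 1 := this
        _ = ((r:ℝ) * t + ((sN:ℝ) - r)) / sN := by ring
    have hkey : t ^ ((r:ℝ)/(sN:ℝ)) ≤ B := hgm.trans havg
    have hpow := pow_le_pow_left₀ (Real.rpow_nonneg ht0.le _) hkey sN
    have heq : (t ^ ((r:ℝ)/(sN:ℝ))) ^ (sN:ℕ) = t ^ (r:ℕ) := by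
      rw [← Real.rpow_natCast (t ^ ((r:ℝ)/(sN:ℝ))) sN, ← Real.rpow_mul ht0.le,
        div_mul_cancel₀ _ hsp.ne', Real.rpow_natCast]
    rwa [heq] at hpow




variable {n d : ℕ}

/-- zero-extension of a vector on a finset -/
def extv (T : Finset (Fin n)) (y : {x // x ∈ T} → ℝ) : Fin n → ℝ :=
  fun i => if h : i ∈ T then y ⟨i, h⟩ else 0

lemma extv_dot (T : Finset (Fin n)) (y : {x // x ∈ T} → ℝ) (v : Fin n → ℝ) :
    extv T y ⬝ᵥ v = ∑ a : {x // x ∈ T}, y a * v a.1 := by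
  unfold dotProduct
  calc ∑ i : Fin n, extv T y i * v i
      = ∑ i ∈ T, extv T y i * v i := by
        rw [← Finset.sum_subset (Finset.subset_univ T)]
        intro i _ hi
        simp [extv, hi]
    _ = ∑ a : {x // x ∈ T}, extv T y a.1 * v a.1 := (Finset.sum_coe_sort T _).symm
    _ = ∑ a : {x // x ∈ T}, y a * v a.1 := by
        apply Finset.sum_congr rfl
        intro a _
        simp [extv, a.2]

lemma extv_norm (T : Finset (Fin n)) (y : {x // x ∈ T} → ℝ) :
    extv T y ⬝ᵥ extv T y = y ⬝ᵥ y := by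
  rw [extv_dot]
  apply Finset.sum_congr rfl
  intro a _
  simp [extv, a.2]

lemma extv_form (C : Matrix (Fin n) (Fin n) ℝ) (T : Finset (Fin n)) (y : {x // x ∈ T} → ℝ) :
    extv T y ⬝ᵥ (C *ᵥ extv T y) = y ⬝ᵥ (subSub C T *ᵥ y) := by
  rw [extv_dot]
  apply Finset.sum_congr rfl
  intro a _
  congr 1
  show (C *ᵥ extv T y) a.1 = (subSub C T *ᵥ y) a
  show C a.1 ⬝ᵥ extv T y = (fun b => subSub C T a b) ⬝ᵥ y
  rw [dotProduct_comm, extv_dot, dotProduct_comm]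
  apply Finset.sum_congr rfl
  intro b _
  simp [subSub, mul_comm]

lemma subSub_herm (V : Matrix (Fin d) (Fin n) ℝ) (T : Finset (Fin n)) :
    (subSub (Vᵀ * V) T).IsHermitian := by
  ext a b
  simp only [conjTranspose_apply, star_trivial, subSub, Matrix.of_apply, mul_apply,
    transpose_apply]
  exact Finset.sum_congr rfl fun k _ => mul_comm _ _

lemma form_nonneg (V : Matrix (Fin d) (Fin n) ℝ) (y : Fin n → ℝ) :
    0 ≤ y ⬝ᵥ ((Vᵀ * V) *ᵥ y) := by
  have h : y ⬝ᵥ ((Vᵀ * V) *ᵥ y) = (V *ᵥ y) ⬝ᵥ (V *ᵥ y) := by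
    rw [← mulVec_mulVec, dotProduct_mulVec, vecMul_transpose]
  rw [h]
  exact Finset.sum_nonneg fun i _ => mul_self_nonneg _

/-- splitting a finset along a subset, as an equiv of coercions -/
def splitEquiv {γ : Type*} [DecidableEq γ] (A T : Finset γ) (hA : A ⊆ T) :
    {i // i ∈ T} ≃ {i // i ∈ A} ⊕ {i // i ∈ T \ A} where
  toFun x := if h : x.1 ∈ A then .inl ⟨x.1, h⟩
    else .inr ⟨x.1, Finset.mem_sdiff.mpr ⟨x.2, h⟩⟩
  invFun z := Sum.elim (fun a => ⟨a.1, hA a.2⟩) (fun b => ⟨b.1, (Finset.mem_sdiff.mp b.2).1⟩) z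
  left_inv x := by by_cases h : x.1 ∈ A <;> simp [h]
  right_inv z := by
    rcases z with a | b
    · simp [a.2]
    · simp [(Finset.mem_sdiff.mp b.2).2]



lemma det_split (C : Matrix (Fin n) (Fin n) ℝ) (A T : Finset (Fin n)) (hA : A ⊆ T)
    (h1 : ∀ i j : Fin n, i ∈ A → j ∈ T \ A → C i j = 0)
    (h2 : ∀ i j : Fin n, i ∈ T \ A → j ∈ A → C i j = 0) :
    (subSub C T).det = (subSub C A).det * (subSub C (T \ A)).det := by
  have hdet : (subSub C T).det
      = ((subSub C T).submatrix (splitEquiv A T hA).symm (splitEquiv A T hA).symm).det :=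
    (det_submatrix_equiv_self (splitEquiv A T hA).symm _).symm
  set N := (subSub C T).submatrix (splitEquiv A T hA).symm (splitEquiv A T hA).symm with hN
  rw [hdet, ← Matrix.fromBlocks_toBlocks N]
  have h11 : N.toBlocks₁₁ = subSub C A := rfl
  have h22 : N.toBlocks₂₂ = subSub C (T \ A) := rfl
  have h12 : N.toBlocks₁₂ = 0 := by
    ext a b; exact h1 a.1 b.1 a.2 b.2
  have h21 : N.toBlocks₂₁ = 0 := by
    ext b a; exact h2 b.1 a.1 b.2 a.2
  rw [h11, h22, h12, h21, det_fromBlocks_zero₁₂]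

lemma schur_split (V : Matrix (Fin d) (Fin n) ℝ) (A T : Finset (Fin n)) (hA : A ⊆ T)
    (δ : ℝ) (hδpos : 0 < δ)
    (hq : ∀ y : {x // x ∈ T} → ℝ, δ * (y ⬝ᵥ y) ≤ y ⬝ᵥ (subSub (Vᵀ * V) T *ᵥ y)) :
    δ ^ (T \ A).card * (subSub (Vᵀ * V) A).det ≤ (subSub (Vᵀ * V) T).det := by
  set e := splitEquiv A T hA with he
  set N := (subSub (Vᵀ * V) T).submatrix e.symm e.symm with hN
  have herm : N.IsHermitian := (subSub_herm V T).submatrix _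
  have hq' : ∀ z : _ ⊕ _ → ℝ, δ * (z ⬝ᵥ z) ≤ z ⬝ᵥ N *ᵥ z := by
    intro z
    have h1 : N *ᵥ z = ((subSub (Vᵀ * V) T) *ᵥ (z ∘ ⇑e.symm.symm)) ∘ ⇑e.symm :=
      Matrix.submatrix_mulVec_equiv _ _ _ _
    rw [h1, dotProduct_comp_equiv_symm]
    simp only [Equiv.symm_symm]
    have h2 : z ⬝ᵥ z = (z ∘ ⇑e) ⬝ᵥ (z ∘ ⇑e) :=
      (Fintype.sum_equiv e (fun a => (z ∘ ⇑e) a * (z ∘ ⇑e) a) (fun i => z i * z i)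
        (fun a => rfl)).symm
    rw [h2]
    exact hq (z ∘ ⇑e)
  have hmain := schur_det_ge N herm δ hδpos hq'
  have hcard : Fintype.card {i // i ∈ T \ A} = (T \ A).card := Fintype.card_coe _
  have h11 : N.toBlocks₁₁ = subSub (Vᵀ * V) A := rfl
  have hdet : N.det = (subSub (Vᵀ * V) T).det := det_submatrix_equiv_self e.symm _
  rw [hcard, h11, hdet] at hmain
  exact hmain

end Stmt13Aux

open Stmt13Aux in
/-- If in addition `vᵢᵀ vⱼ = 0` for every `i ∈ Ŝ`, `j ∉ Ŝ`, then a locally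
optimal `Ŝ` satisfies `det(C_{S,S}) ≤ (min{L/δ, (L/(sδ))(n−s) − n/s + 2})^s det(C_{Ŝ,Ŝ})`,
where `δ > 0` is (a lower bound on) `min_{|T|=s} λ_min(C_{T,T})` and `L` is (an upper bound
on) `λ_max(C)`, both expressed through quadratic forms. -/
theorem stmt_13 (d n s : ℕ) (hs1 : 1 ≤ s) (hsd : s ≤ d)
    (V : Matrix (Fin d) (Fin n) ℝ) (hrank : (Vᵀ * V).rank = d)
    (δ L : ℝ) (hδpos : 0 < δ)
    (hδ : ∀ T : Finset (Fin n), T.card = s → ∀ y : {x // x ∈ T} → ℝ,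
      δ * (y ⬝ᵥ y) ≤ y ⬝ᵥ (subSub (Vᵀ * V) T *ᵥ y))
    (hL : ∀ y : Fin n → ℝ, y ⬝ᵥ ((Vᵀ * V) *ᵥ y) ≤ L * (y ⬝ᵥ y))
    (Shat : Finset (Fin n)) (hcard : Shat.card = s)
    (hloc : ∀ i ∈ Shat, ∀ j ∉ Shat,
      (subSub (Vᵀ * V) (insert j (Shat.erase i))).det ≤ (subSub (Vᵀ * V) Shat).det)
    (horth : ∀ i ∈ Shat, ∀ j ∉ Shat, (fun a => V a i) ⬝ᵥ (fun a => V a j) = 0) :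
    ∀ S : Finset (Fin n), S.card = s →
      (subSub (Vᵀ * V) S).det ≤
        (min (L / δ) (L / ((s : ℝ) * δ) * ((n : ℝ) - s) - (n : ℝ) / (s : ℝ) + 2)) ^ s *
          (subSub (Vᵀ * V) Shat).det := by
  intro S hScard
  classical
  -- generic transfer facts
  have hform_le : ∀ (T : Finset (Fin n)) (y : {x // x ∈ T} → ℝ),
      y ⬝ᵥ (subSub (Vᵀ * V) T *ᵥ y) ≤ L * (y ⬝ᵥ y) := by
    intro T y
    rw [← extv_form, ← extv_norm T y]
    exact hL _
  have hform_ge0 : ∀ (T : Finset (Fin n)) (y : {x // x ∈ T} → ℝ),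
      0 ≤ y ⬝ᵥ (subSub (Vᵀ * V) T *ᵥ y) := by
    intro T y
    rw [← extv_form]
    exact form_nonneg V _
  -- basic cardinalities
  have hsn : s ≤ n := by
    have := Finset.card_le_univ S
    rw [hScard] at this
    simpa using this
  have hspos : (0:ℝ) < s := by exact_mod_cast hs1
  -- zero entries
  have hC0 : ∀ i j : Fin n, i ∈ Shat → j ∉ Shat → (Vᵀ * V) i j = 0 := by
    intro i j hi hj
    have h := horth i hi j hj
    simpa [mul_apply, dotProduct] using h
  have hC0' : ∀ i j : Fin n, i ∉ Shat → j ∈ Shat → (Vᵀ * V) i j = 0 := by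
    intro i j hi hj
    have h := horth j hj i hi
    rw [mul_apply] at *
    rw [← h]
    exact Finset.sum_congr rfl fun k _ => by simp [transpose_apply, mul_comm]
  -- the split
  set A := S ∩ Shat with hA
  have hAS : A ⊆ S := Finset.inter_subset_left
  have hASh : A ⊆ Shat := Finset.inter_subset_right
  have hSA : S \ A = S \ Shat := Finset.sdiff_inter_self_left S Shat
  set r := s - A.card with hr
  have hrS : (S \ A).card = r := by rw [Finset.card_sdiff_of_subset hAS, hScard]
  have hrSh : (Shat \ A).card = r := by rw [Finset.card_sdiff_of_subset hASh, hcard]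
  have hr_le_s : r ≤ s := Nat.sub_le _ _
  have hr_le_m : r ≤ n - s := by
    rw [← hrS, hSA]
    have hsub : S \ Shat ⊆ Shatᶜ := by
      intro i hi
      rw [Finset.mem_compl]
      exact (Finset.mem_sdiff.mp hi).2
    have := Finset.card_le_card hsub
    rwa [Finset.card_compl, Fintype.card_fin, hcard] at this
  have hr_cast : (r:ℝ) ≤ (n:ℝ) - s := by
    have h1 : (r:ℝ) ≤ ((n - s : ℕ):ℝ) := by exact_mod_cast hr_le_m
    rwa [Nat.cast_sub hsn] at h1
  -- δ ≤ L
  have hδL : δ ≤ L := by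
    have hy1 : ((fun _ => (1:ℝ)) : {x // x ∈ Shat} → ℝ) ⬝ᵥ (fun _ => (1:ℝ)) = (s:ℝ) := by
      simp [dotProduct, Finset.card_univ, hcard]
    have h1 := hδ Shat hcard (fun _ => (1:ℝ))
    have h2 := hform_le Shat (fun _ => (1:ℝ))
    rw [hy1] at h1 h2
    exact le_of_mul_le_mul_right (le_trans h1 h2) hspos
  set t := L / δ with ht
  have htpos : 0 < t := div_pos (lt_of_lt_of_le hδpos hδL) hδpos
  have ht1 : 1 ≤ t := (one_le_div hδpos).mpr hδL
  have hLt : L = t * δ := by rw [ht, div_mul_cancel₀ L hδpos.ne']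
  -- determinant factorization of S
  have hdet1 : (subSub (Vᵀ * V) S).det
      = (subSub (Vᵀ * V) A).det * (subSub (Vᵀ * V) (S \ A)).det := by
    apply det_split _ _ _ hAS
    · intro i j hi hj
      exact hC0 i j (Finset.mem_inter.mp hi).2 (by rw [hSA] at hj; exact (Finset.mem_sdiff.mp hj).2)
    · intro i j hi hj
      exact hC0' i j (by rw [hSA] at hi; exact (Finset.mem_sdiff.mp hi).2) (Finset.mem_inter.mp hj).2
  -- bound on det of outside part
  have hdB : (subSub (Vᵀ * V) (S \ A)).det ≤ L ^ r := by
    have := det_le_of_form (subSub (Vᵀ * V) (S \ A)) (subSub_herm V _) L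
      (hform_ge0 _) (hform_le _)
    rwa [Fintype.card_coe, hrS] at this
  -- nonnegativity of det of intersection part
  have hdA0 : 0 ≤ (subSub (Vᵀ * V) A).det := by
    have h := det_ge_of_form (subSub (Vᵀ * V) A) (subSub_herm V _) 0 le_rfl
      (fun y => by simpa using hform_ge0 A y)
    exact le_trans (pow_nonneg le_rfl _) h
  -- Schur bound for Shat
  have hSchur : δ ^ r * (subSub (Vᵀ * V) A).det ≤ (subSub (Vᵀ * V) Shat).det := by
    have := schur_split V A Shat hASh δ hδpos (hδ Shat hcard)
    rwa [hrSh] at this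
  -- numeric inequality
  have hnum := numeric s r ((n:ℝ) - s) t hs1 ht1 hr_le_s hr_cast
  set M := min t ((((n:ℝ) - s) * t + ((s:ℝ) - ((n:ℝ) - s))) / s) with hM
  have hMpos : 0 < M ^ s := lt_of_lt_of_le (pow_pos htpos r) hnum
  -- rewrite goal min
  have hgoal : min (L / δ) (L / ((s : ℝ) * δ) * ((n : ℝ) - s) - (n : ℝ) / (s : ℝ) + 2) = M := by
    rw [hM, ht]
    congr 1
    field_simp
    ring
  rw [hgoal]
  -- final chain
  have hLr : L ^ r ≤ M ^ s * δ ^ r := by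
    rw [hLt, mul_pow]
    exact mul_le_mul_of_nonneg_right hnum (pow_nonneg hδpos.le r)
  calc (subSub (Vᵀ * V) S).det
      = (subSub (Vᵀ * V) A).det * (subSub (Vᵀ * V) (S \ A)).det := hdet1
    _ ≤ (subSub (Vᵀ * V) A).det * L ^ r := mul_le_mul_of_nonneg_left hdB hdA0
    _ ≤ (subSub (Vᵀ * V) A).det * (M ^ s * δ ^ r) := mul_le_mul_of_nonneg_left hLr hdA0
    _ = M ^ s * (δ ^ r * (subSub (Vᵀ * V) A).det) := by ring
    _ ≤ M ^ s * (subSub (Vᵀ * V) Shat).det := mul_le_mul_of_nonneg_left hSchur hMpos.le
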